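/- arXiv:1202.4640 — 6 statements merged into one kernel-verified Lean document; each statement's English description precedes it below -/
import Mathlib

section
/- Let H and B be self-adjoint operators on a Hilbert space H with B bounded, and suppose the commutation relation e^{-itB} H e^{itB} = e(t)·H holds on dom(H) for all t ∈ ℝ, where e : ℝ → (0,∞) is a differentiable multiplicative homomorphism (e(s+t) = e(s)e(t), e(0) = 1). Then for every z ∈ ℂ \ ℝ, the strong derivative at t = 0 of t ↦ e^{-itB}(H − z)^{-1} e^{itB} exists and equals −e'(0)·(H − z)^{-1} H (H − z)^{-1}. -/
open Complex

set_option synthInstance.maxHeartbeats 1000000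
set_option maxHeartbeats 1000000

/-- If `e^{-itB} H e^{itB} = e(t)·H` on `dom H` for a self-adjoint `H`, a bounded
self-adjoint `B` and a differentiable multiplicative homomorphism `e : ℝ → (0,∞)`, then
for `z ∈ ℂ \ ℝ` the map `t ↦ e^{-itB}(H-z)⁻¹e^{itB}` is strongly differentiable at `t = 0`
with derivative `-e'(0)·(H-z)⁻¹H(H-z)⁻¹`  (note `H(H-z)⁻¹ = 1 + z(H-z)⁻¹`). -/
theorem deriv_conj_resolvent
    {H : Type*} [NormedAddCommGroup H] [InnerProductSpace ℂ H] [CompleteSpace H]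
    (Hop : H →ₗ.[ℂ] H) (hHop : IsSelfAdjoint Hop)
    (B : H →L[ℂ] H) (hB : IsSelfAdjoint B)
    -- the unitary group generated by `B`
    (W : ℝ → H →L[ℂ] H) (hW : ∀ t : ℝ, W t = NormedSpace.exp ((Complex.I * t) • B))
    -- `e` is a differentiable homomorphism `(ℝ,+) → ((0,∞),·)` with `e'(0) = e'`
    (e : ℝ → ℝ) (he_pos : ∀ t, 0 < e t) (he_hom : ∀ s t, e (s + t) = e s * e t)
    (he_zero : e 0 = 1) (e' : ℝ) (he' : HasDerivAt e e' 0)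
    -- the homogeneity relation `e^{-itB} H e^{itB} = e(t) H` on `dom H`
    (hhom : ∀ t : ℝ, ∀ φ : H, ∀ hφ : φ ∈ Hop.domain,
      ∃ hm : W t φ ∈ Hop.domain,
        W (-t) (Hop ⟨W t φ, hm⟩) = e t • Hop ⟨φ, hφ⟩)
    -- `R` is the resolvent `(H - z)⁻¹` for `z ∈ ℂ \ ℝ`
    (z : ℂ) (hz : z.im ≠ 0) (R : H →L[ℂ] H)
    (hR1 : ∀ φ : H, ∃ hm : R φ ∈ Hop.domain, Hop ⟨R φ, hm⟩ - z • R φ = φ)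
    (hR2 : ∀ φ : H, ∀ hφ : φ ∈ Hop.domain, R (Hop ⟨φ, hφ⟩ - z • φ) = φ) :
    ∀ φ : H, HasDerivAt (fun t : ℝ => W (-t) (R (W t φ)))
      ((-e') • R (φ + z • R φ)) 0 := by
  intro φ
  -- group law for `W`
  have hWmul : ∀ a b : ℝ, W a * W b = W (a + b) := by
    intro a b
    rw [hW, hW, hW, ← NormedSpace.exp_add_of_commute_of_mem_ball (𝕂 := ℂ)
      (((Commute.refl B).smul_left _).smul_right _)
      ((NormedSpace.expSeries_radius_eq_top ℂ (H →L[ℂ] H)).symm ▸ edist_lt_top _ _)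
      ((NormedSpace.expSeries_radius_eq_top ℂ (H →L[ℂ] H)).symm ▸ edist_lt_top _ _)]
    congr 1
    rw [← add_smul]
    push_cast
    ring_nf
  have hW0 : W 0 = 1 := by
    rw [hW]
    norm_num [NormedSpace.exp_zero]
  have hWW : ∀ (s : ℝ) (x : H), W (-s) (W s x) = x := by
    intro s x
    rw [← ContinuousLinearMap.mul_apply, hWmul, neg_add_cancel, hW0,
      ContinuousLinearMap.one_apply]
  have hWW' : ∀ (s : ℝ) (x : H), W s (W (-s) x) = x := by
    intro s x
    rw [← ContinuousLinearMap.mul_apply, hWmul, add_neg_cancel, hW0,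
      ContinuousLinearMap.one_apply]
  -- the operator `C = 1 + z • R` and the family `A t = 1 + (e t - 1) • C`
  set C : H →L[ℂ] H := 1 + z • R with hC
  set A : ℝ → H →L[ℂ] H := fun t => 1 + (((e t : ℝ) : ℂ) - 1) • C with hA
  -- key algebraic identity : `W (-t) (R (W t (A t χ))) = R χ`
  have key : ∀ (t : ℝ) (χ : H), W (-t) (R (W t (A t χ))) = R χ := by
    intro t χ
    obtain ⟨hmem, hEq⟩ := hR1 χ
    obtain ⟨hm2, hEq2⟩ := hhom t (R χ) hmem
    -- `Hop (W t (R χ)) = e t • W t (Hop (R χ))`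
    have h1 : Hop ⟨W t (R χ), hm2⟩ = (e t : ℝ) • W t (Hop ⟨R χ, hmem⟩) := by
      have := congrArg (W t) hEq2
      rw [hWW'] at this
      rw [this, (W t).map_smul_of_tower]
    -- `Hop (R χ) = χ + z • R χ`
    have h2 : Hop ⟨R χ, hmem⟩ = χ + z • R χ := by
      have := hEq
      rw [sub_eq_iff_eq_add] at this
      rw [this, add_comm]
    have h3 : Hop ⟨W t (R χ), hm2⟩ - z • W t (R χ) = W t (A t χ) := by
      rw [h1, h2, ← (W t).map_smul_of_tower, ← (W t).map_smul, ← (W t).map_sub]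
      congr 1
      simp only [hA, hC, ContinuousLinearMap.add_apply, ContinuousLinearMap.one_apply,
        ContinuousLinearMap.smul_apply, ContinuousLinearMap.coe_smul', Pi.smul_apply]
      rw [← Complex.coe_smul]
      module
    have h4 := hR2 (W t (R χ)) hm2
    rw [h3] at h4
    rw [h4, hWW]
  -- eventually `A t` is a unit
  have hAcont : ContinuousAt (fun t => ((e t : ℝ) : ℂ) - 1) 0 := by
    exact ((Complex.continuous_ofReal.continuousAt.comp he'.continuousAt).sub
      continuousAt_const)
  have hAunit : ∀ᶠ t in nhds (0 : ℝ), IsUnit (A t) := by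
    have h0 : ((e 0 : ℝ) : ℂ) - 1 = 0 := by rw [he_zero]; simp
    have hsmall : ∀ᶠ t in nhds (0 : ℝ), ‖(((e t : ℝ) : ℂ) - 1) • C‖ < 1 := by
      have hcont : ContinuousAt (fun t => ‖(((e t : ℝ) : ℂ) - 1) • C‖) 0 :=
        (hAcont.smul continuousAt_const).norm
      exact hcont.eventually_lt continuousAt_const (by simp [h0])
    filter_upwards [hsmall] with t ht
    have : A t = 1 - (-((((e t : ℝ) : ℂ) - 1) • C)) := by rw [sub_neg_eq_add]
    rw [this]
    exact (Units.oneSub _ (by rwa [norm_neg])).isUnit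
  -- eventual identification with `R ∘ Ring.inverse (A t)` applied to `φ`
  have heq : ∀ᶠ t in nhds (0 : ℝ),
      W (-t) (R (W t φ)) = R (Ring.inverse (A t) φ) := by
    filter_upwards [hAunit] with t hu
    have h1 := key t (Ring.inverse (A t) φ)
    have h2 : A t (Ring.inverse (A t) φ) = φ := by
      rw [← ContinuousLinearMap.mul_apply, Ring.mul_inverse_cancel _ hu,
        ContinuousLinearMap.one_apply]
    rw [h2] at h1
    exact h1
  -- differentiability of `t ↦ A t` (as a map into the Banach algebra)
  have hsc : HasDerivAt (fun t => ((e t : ℝ) : ℂ) - 1) ((e' : ℝ) : ℂ) 0 :=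
    (he'.ofReal_comp).sub_const 1
  have hAdiff : HasDerivAt A (((e' : ℝ) : ℂ) • C) 0 := by
    set_option synthInstance.maxHeartbeats 1000000 in
    exact (hsc.smul_const C).const_add 1
  -- differentiability of `t ↦ Ring.inverse (A t)`
  have hA0 : A 0 = 1 := by simp [hA, he_zero]
  have hInv : HasDerivAt (fun t => Ring.inverse (A t)) (-(((e' : ℝ) : ℂ) • C)) 0 := by
    have hfd := hasFDerivAt_ringInverse (𝕜 := ℝ) (1 : (H →L[ℂ] H)ˣ)
    rw [show ((1 : (H →L[ℂ] H)ˣ) : H →L[ℂ] H) = A 0 from by rw [hA0]; rfl] at hfd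
    have := hfd.comp_hasDerivAt 0 hAdiff
    simpa [Function.comp_def] using this
  -- apply to `φ` and compose with `R`
  set T : (H →L[ℂ] H) →L[ℝ] H :=
    (R.restrictScalars ℝ).comp
      (((ContinuousLinearMap.apply ℂ H) φ).restrictScalars ℝ) with hT
  have hfin : HasDerivAt (fun t => R (Ring.inverse (A t) φ))
      (R ((-(((e' : ℝ) : ℂ) • C)) φ)) 0 := by
    have := T.hasFDerivAt.comp_hasDerivAt 0 hInv
    simpa [hT, ContinuousLinearMap.apply, Function.comp_def] using this
  have hval : R ((-(((e' : ℝ) : ℂ) • C)) φ) = (-e') • R (φ + z • R φ) := by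
    simp only [hC, ContinuousLinearMap.neg_apply, ContinuousLinearMap.smul_apply,
      ContinuousLinearMap.add_apply, ContinuousLinearMap.one_apply,
      ContinuousLinearMap.coe_smul', Pi.smul_apply, map_neg, map_smul]
    rw [Complex.coe_smul]
    module
  rw [hval] at hfin
  exact hfin.congr_of_eventuallyEq heq
end

section
/- Let H be a self-adjoint operator on a Hilbert space H. If the Hilbert space decomposes as H = ker(H²) ⊕ H_ac(H²), where H_ac(H²) is the absolutely continuous subspace of H², then H = ker(H) ⊕ H_ac(H), where H_ac(H) is the absolutely continuous subspace of H. That is, if H² has purely absolutely continuous spectrum away from 0, then so does H. -/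
open MeasureTheory

/-- If the Hilbert space decomposes as `ker(H²) ⊕ H_ac(H²)` then it decomposes as
`ker(H) ⊕ H_ac(H)`: i.e. if `H²` has purely absolutely continuous spectrum away from `0`,
then so does `H`. Here the spectral measures `μ₁ φ = ⟨φ, E^H(·)φ⟩` and
`μ₂ φ = ⟨φ, E^{H²}(·)φ⟩` are related by `μ₂ φ = (μ₁ φ) ∘ (λ ↦ λ²)⁻¹`, and
`H_ac` is the set of vectors with spectral measure absolutely continuous w.r.t.
Lebesgue measure. -/
theorem decomposition_ker_ac
    {H : Type*} [NormedAddCommGroup H] [InnerProductSpace ℂ H] [CompleteSpace H]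
    (Hop : H →ₗ.[ℂ] H) (hHop : IsSelfAdjoint Hop)
    (μ₁ μ₂ : H → Measure ℝ)
    (hrel : ∀ φ : H, μ₂ φ = (μ₁ φ).map (fun lam : ℝ => lam ^ 2))
    -- `H = ker(H²) ⊕ H_ac(H²)`:
    (hdec : ∀ φ : H, ∃ ψ χ : H, φ = ψ + χ ∧
      (∃ (h1 : ψ ∈ Hop.domain) (h2 : Hop ⟨ψ, h1⟩ ∈ Hop.domain),
        Hop ⟨Hop ⟨ψ, h1⟩, h2⟩ = 0) ∧
      μ₂ χ ≪ volume) :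
    -- `H = ker(H) ⊕ H_ac(H)`:
    ∀ φ : H, ∃ ψ χ : H, φ = ψ + χ ∧
      (∃ h1 : ψ ∈ Hop.domain, Hop ⟨ψ, h1⟩ = 0) ∧
      μ₁ χ ≪ volume := by
  intro φ
  obtain ⟨ψ, χ, hφ, ⟨h1, h2, hker⟩, hac⟩ := hdec φ
  refine ⟨ψ, χ, hφ, ⟨h1, ?_⟩, ?_⟩
  · -- `ker(H²) = ker(H)` direction: from `H²ψ = 0` deduce `Hψ = 0`.
    have hdense : Dense (Hop.domain : Set H) := hHop.dense_domain
    have hadj : Hop.adjoint = Hop := LinearPMap.isSelfAdjoint_def.mp hHop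
    have hsym : Hop.adjoint.IsFormalAdjoint Hop :=
      LinearPMap.adjoint_isFormalAdjoint hdense
    rw [hadj] at hsym
    have key := hsym ⟨ψ, h1⟩ ⟨Hop ⟨ψ, h1⟩, h2⟩
    simp only [hker, inner_zero_right] at key
    exact inner_self_eq_zero.mp key
  · -- absolute continuity: `μ₂ χ ≪ volume` implies `μ₁ χ ≪ volume`.
    intro s hs
    have himg : volume ((fun lam : ℝ => lam ^ 2) '' s) = 0 :=
      MeasureTheory.addHaar_image_eq_zero_of_differentiableOn_of_addHaar_eq_zero volume
        (fun x _ => (differentiable_pow 2 x).differentiableWithinAt) hs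
    set t := toMeasurable volume ((fun lam : ℝ => lam ^ 2) '' s) with ht
    have ht0 : volume t = 0 := by rwa [measure_toMeasurable]
    have h3 : μ₂ χ t = 0 := hac ht0
    rw [hrel χ, Measure.map_apply (by measurability) (measurableSet_toMeasurable _ _)] at h3
    refine measure_mono_null ?_ h3
    exact (Set.subset_preimage_image _ _).trans
      (Set.preimage_mono (subset_toMeasurable _ _))
end

section
/- Let A be a self-adjoint operator on a Hilbert space H. For any vector φ, if the spectral measure of φ with respect to A² is absolutely continuous with respect to Lebesgue measure, then the spectral measure of φ with respect to A is also absolutely continuous. Hence H_ac(A²) ⊆ H_ac(A). -/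
open MeasureTheory

lemma sq_image_null {s : Set ℝ} (hs : volume s = 0) :
    volume ((fun lam : ℝ => lam ^ 2) '' s) = 0 :=
  MeasureTheory.addHaar_image_eq_zero_of_differentiableOn_of_addHaar_eq_zero
    (μ := volume) ((differentiable_pow 2).differentiableOn) hs

/-- If the spectral measure of `φ` with respect to `A²` is absolutely continuous with
respect to Lebesgue measure, then so is the spectral measure of `φ` with respect to `A`;
hence `H_ac(A²) ⊆ H_ac(A)`. The spectral measures are related by
`μ_{A²,φ} = μ_{A,φ} ∘ (λ ↦ λ²)⁻¹` (since `E^{A²}(J) = E^A({λ : λ² ∈ J})`). -/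
theorem ac_sq_subset_ac
    {H : Type*} [NormedAddCommGroup H] [InnerProductSpace ℂ H] [CompleteSpace H]
    (A : H →ₗ.[ℂ] H) (hA : IsSelfAdjoint A)
    (μA μA2 : H → Measure ℝ)
    (hrel : ∀ φ : H, μA2 φ = (μA φ).map (fun lam : ℝ => lam ^ 2)) :
    (∀ φ : H, μA2 φ ≪ volume → μA φ ≪ volume) ∧
    {φ : H | μA2 φ ≪ volume} ⊆ {φ : H | μA φ ≪ volume} := by
  have main : ∀ φ : H, μA2 φ ≪ volume → μA φ ≪ volume := by
    intro φ hac s hs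
    -- the image of `s` under squaring is null
    have himg : volume ((fun lam : ℝ => lam ^ 2) '' s) = 0 := sq_image_null hs
    set t := toMeasurable volume ((fun lam : ℝ => lam ^ 2) '' s) with ht
    have htnull : volume t = 0 := by
      rw [ht, measure_toMeasurable]; exact himg
    have htm : MeasurableSet t := measurableSet_toMeasurable _ _
    have h2 : μA2 φ t = 0 := hac htnull
    rw [hrel φ, Measure.map_apply (by measurability) htm] at h2
    refine measure_mono_null ?_ h2
    intro x hx
    exact subset_toMeasurable _ _ (Set.mem_image_of_mem _ hx)
  exact ⟨main, fun φ h => main φ h⟩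
end

section
/- Let H₀ be self-adjoint on a Hilbert space and f a bounded positive invertible operator (δ ≤ f ≤ C). Define H := f^{1/2} H₀ f^{1/2} on the domain {φ : f^{1/2}φ ∈ dom(H₀)}. Then H is self-adjoint, and for every z ∈ ℂ \ ℝ the resolvent identity (H + z)^{-1} = f^{-1/2} (H₀ + z f^{-1})^{-1} f^{-1/2} holds. -/
open scoped InnerProductSpace


variable {H : Type*} [NormedAddCommGroup H] [InnerProductSpace ℂ H] [CompleteSpace H]

/-- The sandwiched operator `f^{1/2} H₀ f^{1/2}` with domain `{φ : f^{1/2}φ ∈ dom H₀}`. -/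
noncomputable def sandwich (H₀ : H →ₗ.[ℂ] H) (sq : H →L[ℂ] H) : H →ₗ.[ℂ] H where
  domain := H₀.domain.comap (sq : H →ₗ[ℂ] H)
  toFun :=
    { toFun := fun φ => sq (H₀ ⟨sq (φ : H), φ.2⟩)
      map_add' := by
        intro x y
        have h : (⟨sq ((x + y : _) : H), (x + y).2⟩ : H₀.domain)
            = ⟨sq (x : H), x.2⟩ + ⟨sq (y : H), y.2⟩ := by
          apply Subtype.ext; simp
        show sq (H₀ ⟨sq ((x + y : _) : H), (x + y).2⟩) = _
        rw [h, H₀.map_add, map_add]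
      map_smul' := by
        intro c x
        have h : (⟨sq ((c • x : _) : H), (c • x).2⟩ : H₀.domain)
            = c • ⟨sq (x : H), x.2⟩ := by
          apply Subtype.ext; simp
        show sq (H₀ ⟨sq ((c • x : _) : H), (c • x).2⟩) = _
        rw [h, H₀.map_smul, map_smul]; rfl }

/-- If `H₀` is self-adjoint and `f` is a bounded positive invertible operator
(`δ ≤ f ≤ C`) with positive square root `f^{1/2}`, then `H := f^{1/2} H₀ f^{1/2}` is
self-adjoint, and for `z ∈ ℂ \ ℝ` the resolvent identity
`(H + z)⁻¹ = f^{-1/2} (H₀ + z f⁻¹)⁻¹ f^{-1/2}` holds. -/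
theorem sandwich_selfAdjoint_and_resolvent
    (H₀ : H →ₗ.[ℂ] H) (hH₀ : IsSelfAdjoint H₀)
    (f finv sq sqinv : H →L[ℂ] H)
    (hfsa : IsSelfAdjoint f) (hsqsa : IsSelfAdjoint sq)
    (hsq_pos : ∀ φ : H, 0 ≤ (inner (𝕜 := ℂ) φ (sq φ)).re)
    (hsqf : sq ∘L sq = f)
    (hfinv₁ : f ∘L finv = 1) (hfinv₂ : finv ∘L f = 1)
    (hsqinv₁ : sq ∘L sqinv = 1) (hsqinv₂ : sqinv ∘L sq = 1)
    (δ C : ℝ) (hδ : 0 < δ) (hδC : δ ≤ C)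
    (hlow : ∀ φ : H, δ * ‖φ‖ ^ 2 ≤ (inner (𝕜 := ℂ) φ (f φ)).re)
    (hupp : ∀ φ : H, (inner (𝕜 := ℂ) φ (f φ)).re ≤ C * ‖φ‖ ^ 2)
    (z : ℂ) (hz : z.im ≠ 0)
    -- `R₀` is the bounded inverse of `H₀ + z f⁻¹`
    (R₀ : H →L[ℂ] H)
    (hR₀ : ∀ φ : H, ∃ hm : R₀ φ ∈ H₀.domain, H₀ ⟨R₀ φ, hm⟩ + z • finv (R₀ φ) = φ)
    (hR₀' : ∀ φ : H, ∀ hφ : φ ∈ H₀.domain, R₀ (H₀ ⟨φ, hφ⟩ + z • finv φ) = φ) :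
    IsSelfAdjoint (sandwich H₀ sq) ∧
    (∀ φ : H, ∃ hm : sqinv (R₀ (sqinv φ)) ∈ (sandwich H₀ sq).domain,
      (sandwich H₀ sq) ⟨sqinv (R₀ (sqinv φ)), hm⟩ + z • sqinv (R₀ (sqinv φ)) = φ) ∧
    (∀ φ : H, ∀ hφ : φ ∈ (sandwich H₀ sq).domain,
      sqinv (R₀ (sqinv ((sandwich H₀ sq) ⟨φ, hφ⟩ + z • φ))) = φ) := by
  -- basic pointwise identities
  have e1 : ∀ v : H, sq (sqinv v) = v := fun v => DFunLike.congr_fun hsqinv₁ v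
  have e2 : ∀ v : H, sqinv (sq v) = v := fun v => DFunLike.congr_fun hsqinv₂ v
  have e4 : ∀ v : H, finv (f v) = v := fun v => DFunLike.congr_fun hfinv₂ v
  have e5 : ∀ v : H, sq (sq v) = f v := fun v => DFunLike.congr_fun hsqf v
  have efinv : ∀ v : H, finv v = sqinv (sqinv v) := by
    intro v
    have h : f (sqinv (sqinv v)) = v := by rw [← e5, e1, e1]
    conv_lhs => rw [← h, e4]
  have hsqi : ∀ x y : H, ⟪sq x, y⟫_ℂ = ⟪x, sq y⟫_ℂ := fun x y => hsqsa.isSymmetric x y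
  have hsqinvi : ∀ x y : H, ⟪sqinv x, y⟫_ℂ = ⟪x, sqinv y⟫_ℂ := by
    intro x y
    calc ⟪sqinv x, y⟫_ℂ = ⟪sqinv x, sq (sqinv y)⟫_ℂ := by rw [e1]
    _ = ⟪sq (sqinv x), sqinv y⟫_ℂ := (hsqi _ _).symm
    _ = ⟪x, sqinv y⟫_ℂ := by rw [e1]
  have hfinvi : ∀ x y : H, ⟪finv x, y⟫_ℂ = ⟪x, finv y⟫_ℂ := by
    intro x y; rw [efinv, efinv, hsqinvi, hsqinvi]
  -- self-adjointness infrastructure for `H₀`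
  have hadj : LinearPMap.adjoint H₀ = H₀ := LinearPMap.isSelfAdjoint_def.mp hH₀
  have hdense₀ : Dense (H₀.domain : Set H) := hH₀.dense_domain
  have hsym₀ : ∀ x y : H₀.domain, ⟪(H₀ x : H), (y : H)⟫_ℂ = ⟪(x : H), H₀ y⟫_ℂ := by
    have h' := LinearPMap.adjoint_isFormalAdjoint hdense₀ (T := H₀)
    rw [hadj] at h'
    exact h'
  have hval : ∀ y w : H, (∀ x : H₀.domain, ⟪w, (x : H)⟫_ℂ = ⟪y, H₀ x⟫_ℂ) →
      ∃ hm : y ∈ H₀.domain, H₀ ⟨y, hm⟩ = w := by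
    intro y w h
    have hmem : y ∈ (LinearPMap.adjoint H₀).domain :=
      LinearPMap.mem_adjoint_domain_of_exists y ⟨w, h⟩
    have happ : LinearPMap.adjoint H₀ ⟨y, hmem⟩ = w :=
      LinearPMap.adjoint_apply_eq hdense₀ ⟨y, hmem⟩ h
    obtain ⟨y', hy', heq⟩ := LinearPMap.exists_of_le hadj.le ⟨y, hmem⟩
    have hm : y ∈ H₀.domain := by rw [show y = (y' : H) from hy']; exact y'.2
    refine ⟨hm, ?_⟩
    have hsub : (⟨y, hm⟩ : H₀.domain) = y' := Subtype.ext hy'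
    rw [hsub, ← heq, happ]
  set zb := (starRingEnd ℂ) z with hzb
  set R₁ := ContinuousLinearMap.adjoint R₀ with hR₁def
  have hR₁ : ∀ φ : H, ∃ hm : R₁ φ ∈ H₀.domain, H₀ ⟨R₁ φ, hm⟩ + zb • finv (R₁ φ) = φ := by
    intro φ
    have hkey : ∀ x : H₀.domain, ⟪φ - zb • finv (R₁ φ), (x : H)⟫_ℂ = ⟪R₁ φ, H₀ x⟫_ℂ := by
      intro x
      have hx : R₀ (H₀ x + z • finv (x : H)) = (x : H) := by
        have := hR₀' (x : H) x.2
        simpa using this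
      have h1 : ⟪(R₁ φ : H), H₀ x + z • finv (x : H)⟫_ℂ = ⟪φ, (x : H)⟫_ℂ := by
        rw [hR₁def, ContinuousLinearMap.adjoint_inner_left, hx]
      rw [inner_add_right, inner_smul_right] at h1
      have h2 : ⟪(R₁ φ : H), finv (x : H)⟫_ℂ = ⟪finv (R₁ φ), (x : H)⟫_ℂ := (hfinvi _ _).symm
      rw [inner_sub_left, inner_smul_left]
      simp only [hzb, Complex.conj_conj]
      linear_combination z * h2 - h1
    obtain ⟨hm, hv⟩ := hval (R₁ φ) (φ - zb • finv (R₁ φ)) hkey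
    exact ⟨hm, by rw [hv]; abel⟩
  have hR₁' : ∀ φ : H, ∀ hφ : φ ∈ H₀.domain, R₁ (H₀ ⟨φ, hφ⟩ + zb • finv φ) = φ := by
    intro φ hφ
    refine ext_inner_right ℂ fun u => ?_
    rw [hR₁def, ContinuousLinearMap.adjoint_inner_left]
    obtain ⟨hm, hv⟩ := hR₀ u
    calc ⟪H₀ ⟨φ, hφ⟩ + zb • finv φ, R₀ u⟫_ℂ
        = ⟪(H₀ ⟨φ, hφ⟩ : H), R₀ u⟫_ℂ + z * ⟪finv φ, R₀ u⟫_ℂ := by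
          rw [inner_add_left, inner_smul_left]; simp [hzb, Complex.conj_conj]
      _ = ⟪φ, H₀ ⟨R₀ u, hm⟩⟫_ℂ + z * ⟪φ, finv (R₀ u)⟫_ℂ := by
          rw [hsym₀ ⟨φ, hφ⟩ ⟨R₀ u, hm⟩, hfinvi]
      _ = ⟪φ, (H₀ ⟨R₀ u, hm⟩ : H) + z • finv (R₀ u)⟫_ℂ := by
          rw [inner_add_right, inner_smul_right]
      _ = ⟪φ, u⟫_ℂ := by rw [hv]
  -- abbreviation
  set S := sandwich H₀ sq with hSdef
  have hmemS : ∀ v : H, v ∈ S.domain ↔ sq v ∈ H₀.domain := fun v => Iff.rfl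
  have happS : ∀ (v : H) (hv : v ∈ S.domain), S ⟨v, hv⟩ = sq (H₀ ⟨sq v, hv⟩) := fun v hv => rfl
  -- part 2 (generic in the spectral parameter)
  have part2 : ∀ (w : ℂ) (R : H →L[ℂ] H),
      (∀ ψ : H, ∃ hm : R ψ ∈ H₀.domain, H₀ ⟨R ψ, hm⟩ + w • finv (R ψ) = ψ) →
      ∀ φ : H, ∃ hm : sqinv (R (sqinv φ)) ∈ S.domain,
        S ⟨sqinv (R (sqinv φ)), hm⟩ + w • sqinv (R (sqinv φ)) = φ := by
    intro w R hR φ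
    obtain ⟨hm, hv⟩ := hR (sqinv φ)
    have hmem : sqinv (R (sqinv φ)) ∈ S.domain := by
      rw [hmemS, e1]; exact hm
    refine ⟨hmem, ?_⟩
    rw [happS]
    have hsub : (⟨sq (sqinv (R (sqinv φ))), hmem⟩ : H₀.domain) = ⟨R (sqinv φ), hm⟩ :=
      Subtype.ext (e1 _)
    rw [hsub]
    have h := congrArg sq hv
    rw [map_add, map_smul, e1, efinv, e1] at h
    exact h
  -- part 3 (generic in the spectral parameter)
  have part3 : ∀ (w : ℂ) (R : H →L[ℂ] H),
      (∀ ψ : H, ∀ hψ : ψ ∈ H₀.domain, R (H₀ ⟨ψ, hψ⟩ + w • finv ψ) = ψ) →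
      ∀ φ : H, ∀ hφ : φ ∈ S.domain,
        sqinv (R (sqinv (S ⟨φ, hφ⟩ + w • φ))) = φ := by
    intro w R hR φ hφ
    have h1 : sqinv (S ⟨φ, hφ⟩ + w • φ) = H₀ ⟨sq φ, hφ⟩ + w • finv (sq φ) := by
      rw [happS, map_add, map_smul, e2, efinv (sq φ), e2 φ]
    rw [h1, hR (sq φ) hφ, e2]
  -- symmetry of S
  have hsymS : ∀ x y : S.domain, ⟪(S x : H), (y : H)⟫_ℂ = ⟪(x : H), S y⟫_ℂ := by
    intro x y
    calc ⟪(S x : H), (y : H)⟫_ℂ = ⟪sq (H₀ ⟨sq (x : H), x.2⟩), (y : H)⟫_ℂ := rfl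
      _ = ⟪(H₀ ⟨sq (x : H), x.2⟩ : H), sq (y : H)⟫_ℂ := hsqi _ _
      _ = ⟪sq (x : H), (H₀ ⟨sq (y : H), y.2⟩ : H)⟫_ℂ := hsym₀ ⟨sq (x : H), x.2⟩ ⟨sq (y : H), y.2⟩
      _ = ⟪(x : H), sq (H₀ ⟨sq (y : H), y.2⟩)⟫_ℂ := hsqi _ _
      _ = ⟪(x : H), S y⟫_ℂ := rfl
  -- density of the domain of S
  have hdS : Dense (S.domain : Set H) := by
    intro u
    obtain ⟨g, hg_mem, hg_lim⟩ := mem_closure_iff_seq_limit.mp (hdense₀ (sq u))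
    refine mem_closure_iff_seq_limit.mpr ⟨fun n => sqinv (g n), fun n => ?_, ?_⟩
    · simp only [SetLike.mem_coe, hmemS, e1]
      exact hg_mem n
    · have := (sqinv.continuous.tendsto (sq u)).comp hg_lim
      rwa [Function.comp_def, e2] at this
  -- S is contained in its adjoint
  have hle : S ≤ LinearPMap.adjoint S :=
    LinearPMap.IsFormalAdjoint.le_adjoint hdS hsymS
  -- main claim: the adjoint is contained in S
  have main : ∀ (φ : H) (hφ : φ ∈ (LinearPMap.adjoint S).domain),
      ∃ hm : φ ∈ S.domain, LinearPMap.adjoint S ⟨φ, hφ⟩ = S ⟨φ, hm⟩ := by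
    intro φ hφ
    set w := LinearPMap.adjoint S ⟨φ, hφ⟩ with hwdef
    have hw : ∀ x : S.domain, ⟪w, (x : H)⟫_ℂ = ⟪φ, (S x : H)⟫_ℂ := fun x =>
      LinearPMap.adjoint_isFormalAdjoint hdS ⟨φ, hφ⟩ x
    obtain ⟨hmη, hvη⟩ := part2 zb R₁ hR₁ (w + zb • φ)
    set η := sqinv (R₁ (sqinv (w + zb • φ))) with hηdef
    have key : ∀ x : S.domain, ⟪φ - η, (S x : H) + z • (x : H)⟫_ℂ = 0 := by
      intro x
      have h1 : ⟪w, (x : H)⟫_ℂ = ⟪φ, (S x : H)⟫_ℂ := hw x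
      have h2 : ⟪(S ⟨η, hmη⟩ : H), (x : H)⟫_ℂ = ⟪η, (S x : H)⟫_ℂ := hsymS ⟨η, hmη⟩ x
      have h3 : (S ⟨η, hmη⟩ : H) = w + zb • φ - zb • η := eq_sub_of_add_eq hvη
      rw [h3] at h2
      simp only [inner_sub_left, inner_add_left, inner_smul_left, inner_add_right,
        inner_smul_right, hzb, Complex.conj_conj] at h1 h2 ⊢
      linear_combination h2 - h1
    have hzero : φ - η = 0 := by
      have hall : ∀ u : H, ⟪φ - η, u⟫_ℂ = 0 := by
        intro u
        obtain ⟨hm', hv'⟩ := part2 z R₀ hR₀ u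
        rw [← hv']
        exact key ⟨_, hm'⟩
      have := hall (φ - η)
      rwa [inner_self_eq_zero] at this
    have hEq : φ = η := sub_eq_zero.mp hzero
    have hm : φ ∈ S.domain := by rw [hEq]; exact hmη
    refine ⟨hm, ?_⟩
    have h5 : S ⟨η, hmη⟩ + zb • η = w + zb • η := by
      rw [hvη, hEq]
    have h6 : S ⟨η, hmη⟩ = w := add_right_cancel h5
    have h7 : (⟨φ, hm⟩ : S.domain) = ⟨η, hmη⟩ := Subtype.ext hEq
    rw [h7, h6]
  have hge : LinearPMap.adjoint S ≤ S := by
    refine ⟨fun φ hφ => (main φ hφ).1, fun x y hxy => ?_⟩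
    obtain ⟨hm, heq⟩ := main (x : H) x.2
    rw [heq]
    exact congrArg S (Subtype.ext hxy)
  refine ⟨LinearPMap.isSelfAdjoint_def.mpr (le_antisymm hge hle), part2 z R₀ hR₀, part3 z R₀ hR₀'⟩
end

section
/- Let S be a bounded operator and A a self-adjoint operator on a Hilbert space H. If the map t ↦ e^{-itA} S e^{itA} is strongly differentiable at t = 0 with strong derivative D ∈ B(H), then for all φ, ψ ∈ dom(A): ⟨Aφ, Sψ⟩ − ⟨φ, S Aψ⟩ = ⟨φ, iDψ⟩; i.e., the commutator form [A, S] on dom(A) is given by the bounded operator iD. -/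
open scoped InnerProductSpace

/-- If `S` is bounded, `A` is self-adjoint generating the unitary group `e^{itA}`, and
`t ↦ e^{-itA} S e^{itA}` is strongly differentiable at `0` with derivative `D`, then
for all `φ, ψ ∈ dom A`: `⟨Aφ, Sψ⟩ − ⟨φ, S Aψ⟩ = ⟨φ, iDψ⟩`, i.e. the commutator form
`[A, S]` on `dom A` is given by the bounded operator `iD`. -/
theorem commutator_form_of_strong_deriv
    {H : Type*} [NormedAddCommGroup H] [InnerProductSpace ℂ H] [CompleteSpace H]
    (A : H →ₗ.[ℂ] H) (hA : IsSelfAdjoint A)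
    (W : ℝ → H ≃ₗᵢ[ℂ] H)
    (hgrp : ∀ s t : ℝ, W (s + t) = (W s).trans (W t))
    (hgen : ∀ φ : H, ∀ hφ : φ ∈ A.domain,
      HasDerivAt (fun t : ℝ => (W t) φ) (Complex.I • A ⟨φ, hφ⟩) 0)
    (S D : H →L[ℂ] H)
    (hD : ∀ φ : H, HasDerivAt (fun t : ℝ => (W (-t)) (S ((W t) φ))) (D φ) 0) :
    ∀ φ ψ : H, ∀ hφ : φ ∈ A.domain, ∀ hψ : ψ ∈ A.domain,
      ⟪A ⟨φ, hφ⟩, S ψ⟫_ℂ - ⟪φ, S (A ⟨ψ, hψ⟩)⟫_ℂ = ⟪φ, Complex.I • D ψ⟫_ℂ := by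
  intro φ ψ hφ hψ
  have hW0 : ∀ x : H, W 0 x = x := by
    intro x
    have h := hgrp 0 0
    simp only [add_zero] at h
    have key : (W 0) ((W 0) x) = ((W 0).trans (W 0)) x :=
      (LinearIsometryEquiv.trans_apply _ _ _).symm
    rw [← h] at key
    exact (W 0).injective key
  -- ⟪φ, W(-t) x⟫ = ⟪W t φ, x⟫
  have hinv : ∀ (t : ℝ) (x : H), W (-t) x = (W t).symm x := by
    intro t x
    apply (W t).injective
    have h := hgrp (-t) t
    simp only [neg_add_cancel] at h
    have : (W t) ((W (-t)) x) = ((W (-t)).trans (W t)) x := rfl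
    rw [this, ← h, hW0, (W t).apply_symm_apply]
  have hadj : ∀ (t : ℝ) (x y : H), ⟪x, W (-t) y⟫_ℂ = ⟪W t x, y⟫_ℂ := by
    intro t x y
    rw [hinv]
    calc ⟪x, (W t).symm y⟫_ℂ = ⟪W t x, W t ((W t).symm y)⟫_ℂ := ((W t).inner_map_map x _).symm
      _ = ⟪W t x, y⟫_ℂ := by rw [(W t).apply_symm_apply]
  -- two expressions for g
  set g : ℝ → ℂ := fun t => ⟪φ, (W (-t)) (S ((W t) ψ))⟫_ℂ with hg
  have hg1 : HasDerivAt g ⟪φ, D ψ⟫_ℂ 0 := by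
    have := ((innerSL ℂ φ).hasFDerivAt.restrictScalars ℝ).comp_hasDerivAt 0 (hD ψ)
    simp only [ContinuousLinearMap.coe_restrictScalars', innerSL_apply_apply] at this
    exact this
  have hg2 : HasDerivAt g (⟪φ, S (Complex.I • A ⟨ψ, hψ⟩)⟫_ℂ + ⟪Complex.I • A ⟨φ, hφ⟩, S ψ⟫_ℂ) 0 := by
    have hf : HasDerivAt (fun t : ℝ => (W t) φ) (Complex.I • A ⟨φ, hφ⟩) 0 := hgen φ hφ
    have hgS : HasDerivAt (fun t : ℝ => S ((W t) ψ)) (S (Complex.I • A ⟨ψ, hψ⟩)) 0 :=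
      (S.hasFDerivAt.restrictScalars ℝ).comp_hasDerivAt 0 (hgen ψ hψ)
    have h := hf.inner ℂ hgS
    have heq : (fun t : ℝ => ⟪(W t) φ, S ((W t) ψ)⟫_ℂ) = g := by
      funext t
      rw [hg, ← hadj t]
    rw [heq] at h
    simp only [hW0] at h
    exact h
  have huniq := hg1.unique hg2
  -- now algebra
  have hS : S (Complex.I • A ⟨ψ, hψ⟩) = Complex.I • S (A ⟨ψ, hψ⟩) := map_smul S _ _
  rw [hS, inner_smul_right, inner_smul_left] at huniq
  rw [inner_smul_right]
  rw [Complex.conj_I] at huniq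
  have : ⟪A ⟨φ, hφ⟩, S ψ⟫_ℂ - ⟪φ, S (A ⟨ψ, hψ⟩)⟫_ℂ
      = Complex.I * (Complex.I * ⟪φ, S (A ⟨ψ, hψ⟩)⟫_ℂ + -Complex.I * ⟪A ⟨φ, hφ⟩, S ψ⟫_ℂ) := by
    ring_nf
    rw [Complex.I_sq]
    ring
  rw [this, ← huniq]
end

section
/- Let g be a bounded self-adjoint operator with g ≥ δ > 0 on a Hilbert space, H a self-adjoint operator, and suppose g ∈ C¹(H) with bounded commutator [g, H] = B. Then g^{1/2} ∈ C¹(H), and the bounded commutator [g^{1/2}, H] satisfies g^{1/2}[g^{1/2}, H] + [g^{1/2}, H]g^{1/2} = [g, H]. -/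
open scoped InnerProductSpace
namespace SqrtReg
noncomputable def c : ℕ → ℝ
  | 0 => 1
  | n + 1 => c n * ((n : ℝ) - 1/2) / (n + 1)
lemma c_zero : c 0 = 1 := rfl
lemma c_succ (n : ℕ) : c (n + 1) = c n * ((n : ℝ) - 1/2) / (n + 1) := rfl
lemma c_one : c 1 = -(1/2) := by rw [c_succ, c_zero]; norm_num

lemma c_mul_succ (n : ℕ) : ((n:ℝ) + 1) * c (n + 1) = c n * ((n : ℝ) - 1/2) := by
  rw [c_succ]
  have h2 : ((n:ℝ) + 1) ≠ 0 := by positivity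
  field_simp

/-- Convolution coefficients of the square of the series. -/
noncomputable def E (n : ℕ) : ℝ := ∑ k ∈ Finset.range (n + 1), c k * c (n - k)

lemma E_zero : E 0 = 1 := by simp [E, c_zero]

lemma E_one : E 1 = -1 := by
  simp [E, Finset.sum_range_succ, c_zero, c_one]; norm_num

lemma weighted_sym (n : ℕ) : ∑ k ∈ Finset.range (n + 1), (k:ℝ) * (c k * c (n - k))
    = (n:ℝ) / 2 * E n := by
  have h := Finset.sum_range_reflect (fun k => (k:ℝ) * (c k * c (n - k))) (n + 1)
  -- h : ∑ j in range (n+1), f (n + 1 - 1 - j) = ∑ k in range (n+1), f k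
  have h2 : ∀ j ∈ Finset.range (n + 1), (((n + 1 - 1 - j : ℕ)):ℝ) * (c (n + 1 - 1 - j) * c (n - (n + 1 - 1 - j)))
      = ((n:ℝ) - (j:ℝ)) * (c (n - j) * c j) := by
    intro j hj
    rw [Finset.mem_range] at hj
    have hj' : j ≤ n := Nat.lt_succ_iff.mp hj
    have e1 : n + 1 - 1 - j = n - j := by omega
    have e2 : n - (n - j) = j := by omega
    rw [e1, e2, Nat.cast_sub hj']
  rw [Finset.sum_congr rfl h2] at h
  -- h : ∑ j, (n - j) * (c (n-j) * c j) = ∑ k, k * (c k * c (n-k))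
  have expand : ∑ j ∈ Finset.range (n + 1), ((n:ℝ) - (j:ℝ)) * (c (n - j) * c j)
      = (n:ℝ) * E n - ∑ j ∈ Finset.range (n + 1), (j:ℝ) * (c j * c (n - j)) := by
    rw [E, Finset.mul_sum, ← Finset.sum_sub_distrib]
    apply Finset.sum_congr rfl
    intro j _; ring
  rw [expand] at h
  linarith

lemma E_rec (n : ℕ) : ((n:ℝ) + 1) * E (n + 1) = ((n:ℝ) - 1) * E n := by
  have key : ((n:ℝ) + 1) * E (n + 1) = 2 * ∑ k ∈ Finset.range (n + 2), (k:ℝ) * (c k * c (n + 1 - k)) := by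
    have := weighted_sym (n + 1)
    push_cast at this ⊢
    rw [this]; ring
  -- shift the sum
  have shift : ∑ k ∈ Finset.range (n + 2), (k:ℝ) * (c k * c (n + 1 - k))
      = ∑ j ∈ Finset.range (n + 1), (((j:ℝ) + 1) * c (j + 1)) * c (n - j) := by
    rw [Finset.sum_range_succ']
    simp only [Nat.cast_zero, zero_mul, add_zero]
    apply Finset.sum_congr rfl
    intro j _
    have e : n + 1 - (j + 1) = n - j := by omega
    rw [e]; push_cast; ring
  have shift2 : ∑ j ∈ Finset.range (n + 1), (((j:ℝ) + 1) * c (j + 1)) * c (n - j)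
      = ∑ j ∈ Finset.range (n + 1), (j:ℝ) * (c j * c (n - j)) - (1/2) * E n := by
    rw [E, Finset.mul_sum, ← Finset.sum_sub_distrib]
    apply Finset.sum_congr rfl
    intro j _
    rw [c_mul_succ]; ring
  rw [key, shift, shift2, weighted_sym]
  ring

lemma E_eq_zero (n : ℕ) : E (n + 2) = 0 := by
  induction n with
  | zero =>
      have h := E_rec 1
      rw [E_one] at h
      push_cast at h
      linarith
  | succ k ih =>
      have h := E_rec (k + 2)
      rw [ih] at h
      rw [mul_zero] at h
      have h2 : ((k:ℝ) + 2 + 1) ≠ 0 := by positivity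
      rcases mul_eq_zero.mp h with h' | h'
      · exfalso; apply h2; push_cast at h' ⊢; linarith
      · show E (k + 2 + 1) = 0; exact h'

lemma c_succ_nonpos (n : ℕ) : c (n + 1) ≤ 0 := by
  induction n with
  | zero => rw [c_one]; norm_num
  | succ k ih =>
      rw [c_succ]
      have h2 : (0:ℝ) < ((k:ℝ) + 1) + 1 := by positivity
      push_cast
      apply div_nonpos_of_nonpos_of_nonneg _ (le_of_lt h2)
      nlinarith [Nat.cast_nonneg (α := ℝ) k]

lemma abs_c_le_one (n : ℕ) : |c n| ≤ 1 := by
  induction n with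
  | zero => simp [c_zero]
  | succ k ih =>
      rw [c_succ, abs_div, abs_mul]
      have h2 : (0:ℝ) < (k:ℝ) + 1 := by positivity
      rw [abs_of_pos h2]
      rw [div_le_one h2]
      have h3 : |(k:ℝ) - 1/2| ≤ (k:ℝ) + 1 := by
        rw [abs_le]; constructor <;> nlinarith [Nat.cast_nonneg (α := ℝ) k]
      nlinarith [abs_nonneg (c k), abs_nonneg ((k:ℝ) - 1/2)]

/-- Partial sums: `∑_{k ≤ n} c k = -2 (n+1) c (n+1)`. -/
lemma sum_c (n : ℕ) : ∑ k ∈ Finset.range (n + 1), c k = -2 * ((n:ℝ) + 1) * c (n + 1) := by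
  induction n with
  | zero => simp [c_zero, c_one]
  | succ k ih =>
      rw [Finset.sum_range_succ, ih]
      have h2 : ((k:ℝ) + 1) ≠ 0 := by positivity
      rw [c_succ (k+1)]
      push_cast
      field_simp
      ring

lemma sum_neg_c_le_one (n : ℕ) : ∑ k ∈ Finset.range n, (-(c (k + 1))) ≤ 1 := by
  have h := sum_c n
  rw [Finset.sum_range_succ'] at h
  -- h : ∑ k in range n, c (k+1) + c 0 = -2(n+1) c(n+1)
  have h4 : (0:ℝ) ≤ -2 * ((n:ℝ) + 1) * c (n + 1) := by
    have := c_succ_nonpos n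
    nlinarith [Nat.cast_nonneg (α := ℝ) n]
  have : ∑ k ∈ Finset.range n, (-(c (k + 1))) = -(∑ k ∈ Finset.range n, c (k + 1)) := by
    simp
  rw [this, c_zero] at *
  linarith

lemma summable_neg_c : Summable fun n => -(c (n + 1)) := by
  apply summable_of_sum_range_le (fun n => neg_nonneg.mpr (c_succ_nonpos n)) sum_neg_c_le_one

lemma tsum_neg_c_le_one : ∑' n, (-(c (n + 1))) ≤ 1 :=
  Summable.tsum_le_of_sum_range_le summable_neg_c sum_neg_c_le_one

variable {H : Type*} [NormedAddCommGroup H] [InnerProductSpace ℂ H] [CompleteSpace H]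
lemma sym {T : H →L[ℂ] H} (hT : IsSelfAdjoint T) (x y : H) :
    ⟪T x, y⟫_ℂ = ⟪x, T y⟫_ℂ :=
  (ContinuousLinearMap.isSelfAdjoint_iff_isSymmetric.mp hT) x y

lemma re_sym {T : H →L[ℂ] H} (hT : IsSelfAdjoint T) (x y : H) :
    (⟪x, T y⟫_ℂ).re = (⟪y, T x⟫_ℂ).re := by
  have h1 : (starRingEnd ℂ) ⟪y, T x⟫_ℂ = ⟪x, T y⟫_ℂ := by
    rw [inner_conj_symm, sym hT x y]
  rw [← h1, Complex.conj_re]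

lemma re_inner_self (x : H) : (⟪x, x⟫_ℂ).re = ‖x‖ ^ 2 := by
  rw [inner_self_eq_norm_sq_to_K (𝕜 := ℂ)]
  push_cast
  simp [pow_two, Complex.mul_re]

lemma inner_rsmul_left (t : ℝ) (x y : H) : ⟪t • x, y⟫_ℂ = (t : ℂ) * ⟪x, y⟫_ℂ := by
  rw [RCLike.real_smul_eq_coe_smul (K := ℂ), inner_smul_left]
  simp

lemma inner_rsmul_right (t : ℝ) (x y : H) : ⟪x, t • y⟫_ℂ = (t : ℂ) * ⟪x, y⟫_ℂ := by
  rw [RCLike.real_smul_eq_coe_smul (K := ℂ), inner_smul_right]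
  norm_num

/-- Norm bound for self-adjoint operators from quadratic form bounds. -/
lemma norm_le_of_form {T : H →L[ℂ] H} (hT : IsSelfAdjoint T) {a : ℝ} (ha : 0 ≤ a)
    (h : ∀ φ : H, |(⟪φ, T φ⟫_ℂ).re| ≤ a * ‖φ‖ ^ 2) : ‖T‖ ≤ a := by
  refine T.opNorm_le_bound ha fun ψ => ?_
  rcases eq_or_ne (T ψ) 0 with h0 | h0
  · rw [h0, norm_zero]; positivity
  have hψ : ψ ≠ 0 := fun hh => h0 (by rw [hh, map_zero])
  have key : ∀ x y : H, 4 * (⟪x, T y⟫_ℂ).re ≤ 2 * a * (‖x‖ ^ 2 + ‖y‖ ^ 2) := by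
    intro x y
    have e1 : (⟪x + y, T (x + y)⟫_ℂ).re - (⟪x - y, T (x - y)⟫_ℂ).re = 4 * (⟪x, T y⟫_ℂ).re := by
      simp only [map_add, map_sub, inner_add_left, inner_add_right, inner_sub_left,
        inner_sub_right, Complex.add_re, Complex.sub_re]
      have := re_sym hT x y
      linarith
    have e2 := abs_le.mp (h (x + y))
    have e3 := abs_le.mp (h (x - y))
    have e4 : ‖x + y‖ ^ 2 + ‖x - y‖ ^ 2 = 2 * (‖x‖ ^ 2 + ‖y‖ ^ 2) := by
      have := parallelogram_law_with_norm ℂ x y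
      nlinarith [norm_nonneg (x+y), norm_nonneg (x-y), norm_nonneg x, norm_nonneg y]
    nlinarith
  have hTψ : 0 < ‖T ψ‖ := norm_pos_iff.mpr h0
  set t : ℝ := ‖ψ‖ / ‖T ψ‖ with ht
  have happ := key (t • T ψ) ψ
  have e5 : (⟪t • T ψ, T ψ⟫_ℂ).re = t * ‖T ψ‖ ^ 2 := by
    rw [inner_rsmul_left, Complex.re_ofReal_mul, re_inner_self]
  have e6 : ‖t • T ψ‖ = ‖ψ‖ := by
    rw [norm_smul, Real.norm_eq_abs, abs_of_nonneg (by positivity), ht]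
    field_simp
  rw [e5, e6] at happ
  have hψ' : 0 < ‖ψ‖ := norm_pos_iff.mpr hψ
  have e7 : t * ‖T ψ‖ ^ 2 = ‖ψ‖ * ‖T ψ‖ := by rw [ht]; field_simp
  rw [e7] at happ
  nlinarith

/-- A positive selfadjoint operator kills vectors where its form vanishes. -/
lemma kill_of_form_zero {T : H →L[ℂ] H} (hT : IsSelfAdjoint T)
    (hpos : ∀ φ : H, 0 ≤ (⟪φ, T φ⟫_ℂ).re) {ψ : H} (h : (⟪ψ, T ψ⟫_ℂ).re = 0) : T ψ = 0 := by
  have key : ∀ χ : H, (⟪χ, T ψ⟫_ℂ).re = 0 := by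
    intro χ
    set Bq : ℝ := 2 * (⟪χ, T ψ⟫_ℂ).re with hBq
    set Cq : ℝ := (⟪χ, T χ⟫_ℂ).re with hCq
    have hC : 0 ≤ Cq := hpos χ
    have quad : ∀ t : ℝ, 0 ≤ t * Bq + t ^ 2 * Cq := by
      intro t
      have h1 := hpos (ψ + t • χ)
      have expand : (⟪ψ + t • χ, T (ψ + t • χ)⟫_ℂ).re
          = (⟪ψ, T ψ⟫_ℂ).re + t * ((⟪ψ, T χ⟫_ℂ).re + (⟪χ, T ψ⟫_ℂ).re) + t ^ 2 * Cq := by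
      
        simp only [map_add, inner_add_left, inner_add_right, T.map_smul_of_tower,
          inner_rsmul_left, inner_rsmul_right, Complex.add_re, Complex.re_ofReal_mul]
        rw [hCq]
        ring
      rw [expand, h] at h1
      have hsym := re_sym hT ψ χ
      have e8 : t * ((⟪ψ, T χ⟫_ℂ).re + (⟪χ, T ψ⟫_ℂ).re) = t * Bq := by rw [hsym, hBq]; ring
      rw [e8] at h1
      linarith
    by_contra hB0
    have hB0' : Bq ≠ 0 := by
      intro hh
      exact hB0 (by rw [hBq] at hh; linarith)
    have ht := quad (-Bq / (Cq + 1))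
    have hC1 : 0 < Cq + 1 := by linarith
    have e9 : (-Bq / (Cq + 1)) * Bq + (-Bq / (Cq + 1)) ^ 2 * Cq
        = -Bq ^ 2 / (Cq + 1) ^ 2 := by field_simp; ring
    rw [e9] at ht
    have hBsq : 0 < Bq ^ 2 := by positivity
    have : -Bq ^ 2 / (Cq + 1) ^ 2 < 0 := div_neg_of_neg_of_pos (by linarith) (by positivity)
    linarith
  have hk := key (T ψ)
  rw [re_inner_self] at hk
  have : ‖T ψ‖ = 0 := by nlinarith [norm_nonneg (T ψ)]
  exact norm_eq_zero.mp this


variable {H : Type*} [NormedAddCommGroup H] [InnerProductSpace ℂ H] [CompleteSpace H]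

/-- If `⟪Hop φ, ψ⟫ = ⟪φ, χ⟫` for all `φ` in the domain of the self-adjoint operator `Hop`,
then `ψ` belongs to the domain and `Hop ψ = χ`. -/
lemma mem_domain_of_inner (Hop : H →ₗ.[ℂ] H) (hHop : IsSelfAdjoint Hop) (ψ χ : H)
    (h : ∀ φ : Hop.domain, ⟪Hop φ, ψ⟫_ℂ = ⟪(φ : H), χ⟫_ℂ) :
    ∃ hm : ψ ∈ Hop.domain, Hop ⟨ψ, hm⟩ = χ := by
  have hdense : Dense (Hop.domain : Set H) := hHop.dense_domain
  have hHop' : Hop.adjoint = Hop := hHop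
  have h' : ∀ φ : Hop.domain, ⟪χ, (φ : H)⟫_ℂ = ⟪ψ, Hop φ⟫_ℂ := by
    intro φ
    have h2 := congrArg (starRingEnd ℂ) (h φ)
    rw [inner_conj_symm, inner_conj_symm] at h2
    exact h2.symm
  have hmem' : ψ ∈ Hop.adjoint.domain :=
    LinearPMap.mem_adjoint_domain_of_exists ψ ⟨χ, h'⟩
  have hmem : ψ ∈ Hop.domain := by rw [← hHop']; exact hmem'
  refine ⟨hmem, ?_⟩
  have hval : Hop.adjoint ⟨ψ, hmem'⟩ = χ :=
    LinearPMap.adjoint_apply_eq hdense ⟨ψ, hmem'⟩ h'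
  calc Hop ⟨ψ, hmem⟩ = Hop.adjoint ⟨ψ, hmem'⟩ := by
        congr 1
        · exact hHop'.symm
        · refine (Subtype.heq_iff_coe_eq ?_).mpr rfl
          intro x; rw [hHop']
    _ = χ := hval

/-- The formal derivation giving the commutator of `A ^ n` with `H`,
when the commutator of `A` is `B`. -/
noncomputable def D (A B : H →L[ℂ] H) : ℕ → (H →L[ℂ] H)
  | 0 => 0
  | n + 1 => A * D A B n + B * A ^ n

lemma D_zero (A B : H →L[ℂ] H) : D A B 0 = 0 := rfl

lemma D_succ (A B : H →L[ℂ] H) (n : ℕ) : D A B (n + 1) = A * D A B n + B * A ^ n := rfl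

lemma D_one (A B : H →L[ℂ] H) : D A B 1 = B := by
  simp [D_succ, D_zero]

lemma D_add (A B : H →L[ℂ] H) (n m : ℕ) :
    D A B (n + m) = A ^ n * D A B m + D A B n * A ^ m := by
  induction n with
  | zero => simp [D_zero]
  | succ k ih =>
      have e : k + 1 + m = (k + m) + 1 := by omega
      rw [e, D_succ, ih, D_succ]
      have hc : A * A ^ k = A ^ k * A := ((Commute.refl A).pow_right k).eq
      rw [pow_succ, pow_add]
      simp only [mul_add, add_mul, mul_assoc]
      rw [← mul_assoc A (A ^ k), hc, mul_assoc, add_assoc]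

lemma norm_D_le (A B : H →L[ℂ] H) {q : ℝ} (hq : 0 ≤ q) (hA : ‖A‖ ≤ q) (n : ℕ) :
    ‖D A B (n + 1)‖ ≤ (n + 1 : ℝ) * q ^ n * ‖B‖ := by
  induction n with
  | zero => simp [D_one]
  | succ k ih =>
      rw [D_succ]
      have h1 : ‖A * D A B (k + 1) + B * A ^ (k + 1)‖
          ≤ ‖A‖ * ‖D A B (k + 1)‖ + ‖B‖ * ‖A ^ (k + 1)‖ :=
        (norm_add_le _ _).trans (by gcongr <;> exact norm_mul_le _ _)
      have h2 : ‖A ^ (k + 1)‖ ≤ q ^ (k + 1) :=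
        (norm_pow_le' A (Nat.succ_pos k)).trans (by gcongr)
      have h3 : ‖A‖ * ‖D A B (k + 1)‖ ≤ q * ((k + 1 : ℝ) * q ^ k * ‖B‖) := by
        apply mul_le_mul hA ih (norm_nonneg _) hq
      calc ‖A * D A B (k + 1) + B * A ^ (k + 1)‖
          ≤ q * ((k + 1 : ℝ) * q ^ k * ‖B‖) + ‖B‖ * q ^ (k + 1) :=
            h1.trans (add_le_add h3 (mul_le_mul_of_nonneg_left h2 (norm_nonneg B)))
        _ = (((k + 1 : ℕ) : ℝ) + 1) * q ^ (k + 1) * ‖B‖ := by push_cast; ring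


/-- The commutator form `[S, Hop]` on `dom Hop` is represented by the bounded operator `C`. -/
def CommForm (Hop : H →ₗ.[ℂ] H) (S C : H →L[ℂ] H) : Prop :=
  ∀ (φ ψ : H) (hφ : φ ∈ Hop.domain) (hψ : ψ ∈ Hop.domain),
    ⟪φ, S (Hop ⟨ψ, hψ⟩)⟫_ℂ - ⟪Hop ⟨φ, hφ⟩, S ψ⟫_ℂ = ⟪φ, C ψ⟫_ℂ

variable {Hop : H →ₗ.[ℂ] H} (hHop : IsSelfAdjoint Hop)
include hHop

lemma hop_symm (x y : Hop.domain) : ⟪Hop x, (y : H)⟫_ℂ = ⟪(x : H), Hop y⟫_ℂ := by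
  have hfa := LinearPMap.adjoint_isFormalAdjoint hHop.dense_domain (T := Hop)
  have h : Hop.adjoint = Hop := hHop
  rw [h] at hfa
  exact hfa x y

lemma commForm_one : CommForm Hop 1 0 := by
  intro φ ψ hφ hψ
  simp only [ContinuousLinearMap.one_apply, ContinuousLinearMap.zero_apply, inner_zero_right]
  rw [hop_symm hHop ⟨φ, hφ⟩ ⟨ψ, hψ⟩]
  simp

lemma commForm_smul {S C : H →L[ℂ] H} (a : ℂ) (h : CommForm Hop S C) :
    CommForm Hop (a • S) (a • C) := by
  intro φ ψ hφ hψ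
  have h1 := h φ ψ hφ hψ
  simp only [ContinuousLinearMap.smul_apply, inner_smul_right]
  linear_combination a * h1

lemma commForm_sub {S₁ C₁ S₂ C₂ : H →L[ℂ] H} (h₁ : CommForm Hop S₁ C₁)
    (h₂ : CommForm Hop S₂ C₂) : CommForm Hop (S₁ - S₂) (C₁ - C₂) := by
  intro φ ψ hφ hψ
  have e1 := h₁ φ ψ hφ hψ
  have e2 := h₂ φ ψ hφ hψ
  simp only [ContinuousLinearMap.sub_apply, inner_sub_right]
  linear_combination e1 - e2

/-- A `C¹` operator preserves the domain. -/
lemma commForm_preserves {S C : H →L[ℂ] H} (h : CommForm Hop S C) (ψ : H)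
    (hψ : ψ ∈ Hop.domain) :
    ∃ hm : S ψ ∈ Hop.domain, Hop ⟨S ψ, hm⟩ = S (Hop ⟨ψ, hψ⟩) - C ψ := by
  apply mem_domain_of_inner Hop hHop
  intro φ
  have h1 := h φ ψ φ.2 hψ
  rw [inner_sub_right]
  have e : (⟨(φ : H), φ.2⟩ : Hop.domain) = φ := rfl
  rw [e] at h1
  linear_combination -h1

lemma commForm_mul {S₁ C₁ S₂ C₂ : H →L[ℂ] H} (h₁ : CommForm Hop S₁ C₁)
    (h₂ : CommForm Hop S₂ C₂) : CommForm Hop (S₁ * S₂) (S₁ * C₂ + C₁ * S₂) := by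
  intro φ ψ hφ hψ
  obtain ⟨hm, hval⟩ := commForm_preserves hHop h₂ ψ hψ
  have h1 := h₁ φ (S₂ ψ) hφ hm
  rw [hval] at h1
  simp only [map_sub, inner_sub_right] at h1
  simp only [ContinuousLinearMap.mul_apply, ContinuousLinearMap.add_apply, inner_add_right]
  linear_combination h1

lemma commForm_pow {A B : H →L[ℂ] H} (h : CommForm Hop A B) (n : ℕ) :
    CommForm Hop (A ^ n) (D A B n) := by
  induction n with
  | zero => rw [pow_zero, D_zero]; exact commForm_one hHop
  | succ k ih =>
      rw [pow_succ', D_succ]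
      exact commForm_mul hHop h ih

/-- `CommForm` passes to sums of norm-summable series. -/
lemma commForm_tsum {S C : ℕ → (H →L[ℂ] H)} (hS : Summable S) (hC : Summable C)
    (h : ∀ n, CommForm Hop (S n) (C n)) :
    CommForm Hop (∑' n, S n) (∑' n, C n) := by
  intro φ ψ hφ hψ
  set F : (H →L[ℂ] H) →L[ℂ] ℂ :=
    (innerSL ℂ φ).comp (ContinuousLinearMap.apply ℂ H (Hop ⟨ψ, hψ⟩))
      - (innerSL ℂ (Hop ⟨φ, hφ⟩)).comp (ContinuousLinearMap.apply ℂ H ψ) with hF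
  set G : (H →L[ℂ] H) →L[ℂ] ℂ :=
    (innerSL ℂ φ).comp (ContinuousLinearMap.apply ℂ H ψ) with hG
  have hFdef : ∀ T : H →L[ℂ] H, F T = ⟪φ, T (Hop ⟨ψ, hψ⟩)⟫_ℂ - ⟪Hop ⟨φ, hφ⟩, T ψ⟫_ℂ :=
    fun T => rfl
  have hGdef : ∀ T : H →L[ℂ] H, G T = ⟪φ, T ψ⟫_ℂ := fun T => rfl
  have key : F (∑' n, S n) = G (∑' n, C n) := by
    rw [ContinuousLinearMap.map_tsum F hS, ContinuousLinearMap.map_tsum G hC]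
    apply tsum_congr
    intro n
    rw [hFdef, hGdef]
    exact h n φ ψ hφ hψ
  rw [hFdef, hGdef] at key
  exact key

end SqrtReg

open scoped InnerProductSpace
open SqrtReg in
set_option maxHeartbeats 2000000 in
/-- If `g ≥ δ > 0` is bounded self-adjoint with positive square root `g^{1/2}`,
`H` is self-adjoint, and `g ∈ C¹(H)` with bounded commutator `[g, H] = B`, then
`g^{1/2} ∈ C¹(H)`: the commutator form `[g^{1/2}, H]` on `dom H` extends to a bounded
operator `K` satisfying `g^{1/2} K + K g^{1/2} = B`. -/
theorem sqrt_regularity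
    {H : Type*} [NormedAddCommGroup H] [InnerProductSpace ℂ H] [CompleteSpace H]
    (Hop : H →ₗ.[ℂ] H) (hHop : IsSelfAdjoint Hop)
    (g sq B : H →L[ℂ] H) (hg : IsSelfAdjoint g) (hB : IsSelfAdjoint sq)
    (δ : ℝ) (hδ : 0 < δ) (hg_low : ∀ φ : H, δ * ‖φ‖ ^ 2 ≤ (⟪φ, g φ⟫_ℂ).re)
    -- `sq` is the positive square root `g^{1/2}`
    (hsq_pos : ∀ φ : H, 0 ≤ (⟪φ, sq φ⟫_ℂ).re) (hsq : sq ∘L sq = g)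
    -- `g ∈ C¹(H)` with commutator `[g, H] = B`:
    (hgB : ∀ φ ψ : H, ∀ hφ : φ ∈ Hop.domain, ∀ hψ : ψ ∈ Hop.domain,
      ⟪φ, g (Hop ⟨ψ, hψ⟩)⟫_ℂ - ⟪Hop ⟨φ, hφ⟩, g ψ⟫_ℂ = ⟪φ, B ψ⟫_ℂ) :
    ∃ K : H →L[ℂ] H,
      (∀ φ ψ : H, ∀ hφ : φ ∈ Hop.domain, ∀ hψ : ψ ∈ Hop.domain,
        ⟪φ, sq (Hop ⟨ψ, hψ⟩)⟫_ℂ - ⟪Hop ⟨φ, hφ⟩, sq ψ⟫_ℂ = ⟪φ, K ψ⟫_ℂ) ∧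
      sq ∘L K + K ∘L sq = B := by
  classical
  rcases subsingleton_or_nontrivial H with hsub | hnt
  · refine ⟨0, fun φ ψ hφ hψ => ?_, Subsingleton.elim _ _⟩
    have hφ0 : φ = 0 := Subsingleton.elim _ _
    have hψ0 : ψ = 0 := Subsingleton.elim _ _
    subst hφ0; subst hψ0
    have h2 : sq (0:H) = 0 := map_zero sq
    simp [h2]
  -- Main case
  set M : ℝ := ‖g‖ with hM
  -- basic norm facts
  have hupper : ∀ φ : H, (⟪φ, g φ⟫_ℂ).re ≤ M * ‖φ‖ ^ 2 := by
    intro φ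
    have h1 : (⟪φ, g φ⟫_ℂ).re ≤ ‖⟪φ, g φ⟫_ℂ‖ := by
      exact Complex.re_le_norm _
    have h2 : ‖⟪φ, g φ⟫_ℂ‖ ≤ ‖φ‖ * ‖g φ‖ := norm_inner_le_norm _ _
    have h3 : ‖g φ‖ ≤ ‖g‖ * ‖φ‖ := g.le_opNorm φ
    have h4 : ‖φ‖ * ‖g φ‖ ≤ ‖φ‖ * (‖g‖ * ‖φ‖) :=
      mul_le_mul_of_nonneg_left h3 (norm_nonneg φ)
    rw [hM]; nlinarith [norm_nonneg φ]
  have hδM : δ ≤ M := by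
    obtain ⟨x, hx⟩ := exists_ne (0 : H)
    have h1 := hg_low x
    have h2 := hupper x
    have h3 : 0 < ‖x‖ := norm_pos_iff.mpr hx
    have h4 : 0 < ‖x‖ ^ 2 := by positivity
    nlinarith
  have hM0 : 0 < M := lt_of_lt_of_le hδ hδM
  -- the contraction A₀ and its commutator B₀
  set A₀ : H →L[ℂ] H := 1 - ((M⁻¹ : ℝ) : ℂ) • g with hA₀
  set B₀ : H →L[ℂ] H := -(((M⁻¹ : ℝ) : ℂ) • B) with hB₀
  set r : ℝ := 1 - δ / M with hr
  have hr0 : 0 ≤ r := by rw [hr]; have := div_le_one_of_le₀ hδM hM0.le; linarith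
  have hr1 : r < 1 := by rw [hr]; have := div_pos hδ hM0; linarith
  have hA₀sa : IsSelfAdjoint A₀ := by
    rw [hA₀]
    exact (IsSelfAdjoint.one (R := H →L[ℂ] H)).sub
      ((show IsSelfAdjoint ((M⁻¹ : ℝ) : ℂ) by
        simp [IsSelfAdjoint, Complex.star_def, Complex.conj_ofReal]).smul hg)
  have hA₀form : ∀ φ : H, (⟪φ, A₀ φ⟫_ℂ).re = ‖φ‖ ^ 2 - M⁻¹ * (⟪φ, g φ⟫_ℂ).re := by
    intro φ
    rw [hA₀]
    simp only [ContinuousLinearMap.sub_apply, ContinuousLinearMap.one_apply,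
      ContinuousLinearMap.smul_apply, inner_sub_right, inner_smul_right, Complex.sub_re,
      Complex.re_ofReal_mul]
    rw [re_inner_self]
  have hA₀low : ∀ φ : H, 0 ≤ (⟪φ, A₀ φ⟫_ℂ).re := by
    intro φ
    rw [hA₀form φ]
    have h1 := hupper φ
    have h2 : M⁻¹ * (⟪φ, g φ⟫_ℂ).re ≤ M⁻¹ * (M * ‖φ‖ ^ 2) :=
      mul_le_mul_of_nonneg_left h1 (by positivity)
    have h3 : M⁻¹ * (M * ‖φ‖ ^ 2) = ‖φ‖ ^ 2 := by field_simp
    linarith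
  have hA₀up : ∀ φ : H, (⟪φ, A₀ φ⟫_ℂ).re ≤ r * ‖φ‖ ^ 2 := by
    intro φ
    rw [hA₀form φ, hr]
    have h1 := hg_low φ
    have h2 : M⁻¹ * (δ * ‖φ‖ ^ 2) ≤ M⁻¹ * (⟪φ, g φ⟫_ℂ).re :=
      mul_le_mul_of_nonneg_left h1 (by positivity)
    have h3 : M⁻¹ * (δ * ‖φ‖ ^ 2) = δ / M * ‖φ‖ ^ 2 := by field_simp
    nlinarith
  have hA₀norm : ‖A₀‖ ≤ r :=
    norm_le_of_form hA₀sa hr0 fun φ => abs_le.mpr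
      ⟨by have := hA₀low φ; nlinarith [sq_nonneg ‖φ‖, mul_nonneg hr0 (sq_nonneg ‖φ‖)],
       hA₀up φ⟩
  have hA₀pow : ∀ n : ℕ, ‖A₀ ^ n‖ ≤ r ^ n := by
    intro n
    induction n with
    | zero => simpa [pow_zero] using ContinuousLinearMap.norm_id_le (𝕜 := ℂ) (E := H)
    | succ k ih =>
        rw [pow_succ, pow_succ]
        calc ‖A₀ ^ k * A₀‖ ≤ ‖A₀ ^ k‖ * ‖A₀‖ := norm_mul_le _ _
          _ ≤ r ^ k * r := mul_le_mul ih hA₀norm (norm_nonneg _) (by positivity)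
  -- summability of the two series
  have hSnorm : ∀ n : ℕ, ‖(c n : ℂ) • A₀ ^ n‖ ≤ r ^ n := by
    intro n
    rw [norm_smul, Complex.norm_real, Real.norm_eq_abs]
    calc |c n| * ‖A₀ ^ n‖ ≤ 1 * (r ^ n) :=
          mul_le_mul (abs_c_le_one n) (hA₀pow n) (norm_nonneg _) one_pos.le
      _ = r ^ n := one_mul _
  have hgeom : Summable fun n : ℕ => r ^ n := summable_geometric_of_lt_one hr0 hr1
  have hsummSnorm : Summable fun n : ℕ => ‖(c n : ℂ) • A₀ ^ n‖ :=
    Summable.of_nonneg_of_le (fun n => norm_nonneg _) hSnorm hgeom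
  have hsummS : Summable fun n : ℕ => (c n : ℂ) • A₀ ^ n := hsummSnorm.of_norm
  have hDnorm : ∀ n : ℕ, ‖(c (n + 1) : ℂ) • D A₀ B₀ (n + 1)‖ ≤ ((n : ℝ) + 1) * r ^ n * ‖B₀‖ := by
    intro n
    rw [norm_smul, Complex.norm_real, Real.norm_eq_abs]
    calc |c (n + 1)| * ‖D A₀ B₀ (n + 1)‖ ≤ 1 * (((n : ℝ) + 1) * r ^ n * ‖B₀‖) := by
          apply mul_le_mul (abs_c_le_one _) (norm_D_le A₀ B₀ hr0 hA₀norm n) (norm_nonneg _)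
            one_pos.le
      _ = ((n : ℝ) + 1) * r ^ n * ‖B₀‖ := one_mul _
  have hsummDbound : Summable fun n : ℕ => ((n : ℝ) + 1) * r ^ n * ‖B₀‖ := by
    apply Summable.mul_right
    have h1 : Summable fun n : ℕ => (n : ℝ) * r ^ n := by
      simpa using summable_pow_mul_geometric_of_norm_lt_one 1
        (r := r) (by rwa [Real.norm_eq_abs, abs_of_nonneg hr0])
    simpa [add_mul] using h1.add hgeom
  have hsummDnorm : Summable fun n : ℕ => ‖(c n : ℂ) • D A₀ B₀ n‖ := by
    rw [← summable_nat_add_iff 1]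
    exact Summable.of_nonneg_of_le (fun n => norm_nonneg _) hDnorm hsummDbound
  have hsummD : Summable fun n : ℕ => (c n : ℂ) • D A₀ B₀ n := hsummDnorm.of_norm
  -- the series operators
  set Sinf : H →L[ℂ] H := ∑' n, (c n : ℂ) • A₀ ^ n with hSinf
  set K₀ : H →L[ℂ] H := ∑' n, (c n : ℂ) • D A₀ B₀ n with hK₀
  -- commutator forms
  have hPA₀ : CommForm Hop A₀ B₀ := by
    have h2 : CommForm Hop (((M⁻¹ : ℝ) : ℂ) • g) (((M⁻¹ : ℝ) : ℂ) • B) :=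
      commForm_smul hHop _ hgB
    have h3 := commForm_sub hHop (commForm_one hHop) h2
    rw [zero_sub] at h3
    exact h3
  have hPpow : ∀ n : ℕ, CommForm Hop (A₀ ^ n) (D A₀ B₀ n) := commForm_pow hHop hPA₀
  have hPS : CommForm Hop Sinf K₀ := by
    rw [hSinf, hK₀]
    exact commForm_tsum hHop hsummS hsummD fun n => commForm_smul hHop _ (hPpow n)
  -- algebraic identities
  have hmul : sq * sq = g := by rw [ContinuousLinearMap.mul_def]; exact hsq
  have hEsum : ∀ n : ℕ, (∑ k ∈ Finset.range (n + 1),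
      ((c k : ℂ) • A₀ ^ k) * ((c (n - k) : ℂ) • A₀ ^ (n - k))) = (E n : ℂ) • A₀ ^ n := by
    intro n
    have h1 : ∀ k ∈ Finset.range (n + 1), ((c k : ℂ) • A₀ ^ k) * ((c (n - k) : ℂ) • A₀ ^ (n - k))
        = ((c k * c (n - k) : ℝ) : ℂ) • A₀ ^ n := by
      intro k hk
      rw [Finset.mem_range] at hk
      have hkn : k ≤ n := Nat.lt_succ_iff.mp hk
      rw [smul_mul_smul_comm, ← pow_add]
      congr 1
      · push_cast; ring
      · congr 1; omega
    rw [Finset.sum_congr rfl h1, ← Finset.sum_smul]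
    congr 1
    rw [E]
    push_cast
    rfl
  have hEsumD : ∀ n : ℕ, (∑ k ∈ Finset.range (n + 1),
        (((c k : ℂ) • A₀ ^ k) * ((c (n - k) : ℂ) • D A₀ B₀ (n - k))
          + ((c k : ℂ) • D A₀ B₀ k) * ((c (n - k) : ℂ) • A₀ ^ (n - k))))
      = (E n : ℂ) • D A₀ B₀ n := by
    intro n
    have h1 : ∀ k ∈ Finset.range (n + 1),
        (((c k : ℂ) • A₀ ^ k) * ((c (n - k) : ℂ) • D A₀ B₀ (n - k))
          + ((c k : ℂ) • D A₀ B₀ k) * ((c (n - k) : ℂ) • A₀ ^ (n - k)))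
        = ((c k * c (n - k) : ℝ) : ℂ) • D A₀ B₀ n := by
      intro k hk
      rw [Finset.mem_range] at hk
      have hkn : k ≤ n := Nat.lt_succ_iff.mp hk
      rw [smul_mul_smul_comm, smul_mul_smul_comm, ← smul_add]
      have h2 : A₀ ^ k * D A₀ B₀ (n - k) + D A₀ B₀ k * A₀ ^ (n - k) = D A₀ B₀ n := by
        rw [← D_add]
        congr 1
        omega
      rw [h2]
      congr 1
      push_cast; ring
    rw [Finset.sum_congr rfl h1, ← Finset.sum_smul]
    congr 1
    rw [E]
    push_cast
    rfl
  have htsum01 : ∀ T : ℕ → (H →L[ℂ] H), (∑' n, (E n : ℂ) • T n)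
      = (E 0 : ℂ) • T 0 + (E 1 : ℂ) • T 1 := by
    intro T
    rw [tsum_eq_sum (s := ({0, 1} : Finset ℕ)) ?_]
    · rw [Finset.sum_pair (by norm_num : (0:ℕ) ≠ 1)]
    · intro b hb
      simp only [Finset.mem_insert, Finset.mem_singleton] at hb
      push_neg at hb
      obtain ⟨m, rfl⟩ : ∃ m, b = m + 2 := ⟨b - 2, by omega⟩
      rw [E_eq_zero m]
      simp
  have hSsq : Sinf * Sinf = 1 - A₀ := by
    rw [hSinf, tsum_mul_tsum_eq_tsum_sum_range_of_summable_norm hsummSnorm hsummSnorm,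
      tsum_congr hEsum, htsum01 (fun n => A₀ ^ n), E_zero, E_one]
    norm_num [sub_eq_add_neg]
  have hcommA₀ : Commute sq A₀ := by
    rw [hA₀]
    refine (Commute.one_right sq).sub_right (Commute.smul_right ?_ _)
    rw [← hmul]
    exact (Commute.refl sq).mul_right (Commute.refl sq)
  have hcommS : Commute sq Sinf := by
    unfold Commute SemiconjBy
    rw [hSinf, ← Summable.tsum_mul_left sq hsummS, ← Summable.tsum_mul_right sq hsummS]
    exact tsum_congr fun n => (Commute.smul_right ((hcommA₀).pow_right n) _).eq
  -- self-adjointness of Sinf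
  have hSinfsa : IsSelfAdjoint Sinf := by
    have hterm : ∀ n : ℕ, star ((c n : ℂ) • A₀ ^ n) = (c n : ℂ) • A₀ ^ n := by
      intro n
      rw [star_smul, (hA₀sa.pow n).star_eq, Complex.star_def, Complex.conj_ofReal]
    show star Sinf = Sinf
    rw [hSinf, tsum_star]
    exact tsum_congr hterm
  -- positivity of Sinf
  have hSinfpos : ∀ φ : H, 0 ≤ (⟪φ, Sinf φ⟫_ℂ).re := by
    intro φ
    have h1 : HasSum (fun n => ((c n : ℂ) • A₀ ^ n) φ) (Sinf φ) := by
      rw [hSinf]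
      exact hsummS.hasSum.mapL (ContinuousLinearMap.apply ℂ H φ)
    have h2 : HasSum (fun n => ⟪φ, ((c n : ℂ) • A₀ ^ n) φ⟫_ℂ) ⟪φ, Sinf φ⟫_ℂ :=
      h1.mapL (innerSL ℂ φ)
    have h3 : HasSum (fun n => (⟪φ, ((c n : ℂ) • A₀ ^ n) φ⟫_ℂ).re) ((⟪φ, Sinf φ⟫_ℂ).re) :=
      h2.mapL Complex.reCLM
    set t : ℕ → ℝ := fun n => (⟪φ, (A₀ ^ n) φ⟫_ℂ).re with hts
    have hterm : ∀ n, (⟪φ, ((c n : ℂ) • A₀ ^ n) φ⟫_ℂ).re = c n * t n := by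
      intro n
      rw [hts]
      simp only [ContinuousLinearMap.smul_apply, inner_smul_right, Complex.re_ofReal_mul]
    rw [funext hterm] at h3
    have ht_le : ∀ n, t n ≤ ‖φ‖ ^ 2 := by
      intro n
      rw [hts]
      have e1 : (⟪φ, (A₀ ^ n) φ⟫_ℂ).re ≤ ‖⟪φ, (A₀ ^ n) φ⟫_ℂ‖ := by
        exact Complex.re_le_norm _
      have e2 : ‖⟪φ, (A₀ ^ n) φ⟫_ℂ‖ ≤ ‖φ‖ * ‖(A₀ ^ n) φ‖ := norm_inner_le_norm _ _
      have e3 : ‖(A₀ ^ n) φ‖ ≤ ‖A₀ ^ n‖ * ‖φ‖ := (A₀ ^ n).le_opNorm φ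
      have e4 : ‖A₀ ^ n‖ ≤ 1 := (hA₀pow n).trans (pow_le_one₀ hr0 hr1.le)
      have e5 : ‖φ‖ * ‖(A₀ ^ n) φ‖ ≤ ‖φ‖ * (1 * ‖φ‖) := by
        apply mul_le_mul_of_nonneg_left _ (norm_nonneg φ)
        calc ‖(A₀ ^ n) φ‖ ≤ ‖A₀ ^ n‖ * ‖φ‖ := e3
          _ ≤ 1 * ‖φ‖ := mul_le_mul_of_nonneg_right e4 (norm_nonneg φ)
      nlinarith
    have ht0 : t 0 = ‖φ‖ ^ 2 := by
      rw [hts]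
      simp only [pow_zero, ContinuousLinearMap.one_apply]
      exact re_inner_self φ
    have hR : (⟪φ, Sinf φ⟫_ℂ).re = c 0 * t 0 + ∑' n, c (n + 1) * t (n + 1) := by
      rw [← h3.tsum_eq]
      exact Summable.tsum_eq_zero_add h3.summable
    have hsc : Summable fun n => c (n + 1) := by
      have := summable_neg_c.neg
      simpa using this
    have hsum' : Summable fun n => c (n + 1) * t (n + 1) :=
      (summable_nat_add_iff 1).mpr h3.summable
    have hlow : ∑' n, c (n + 1) * ‖φ‖ ^ 2 ≤ ∑' n, c (n + 1) * t (n + 1) := by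
      apply Summable.tsum_le_tsum _ (hsc.mul_right _) hsum'
      intro n
      exact mul_le_mul_of_nonpos_left (ht_le (n + 1)) (c_succ_nonpos n)
    have heval : ∑' n, c (n + 1) * ‖φ‖ ^ 2 = (∑' n, c (n + 1)) * ‖φ‖ ^ 2 := tsum_mul_right
    have hge : -1 ≤ ∑' n, c (n + 1) := by
      have h5 := tsum_neg_c_le_one
      rw [tsum_neg] at h5
      linarith
    have h6 : -‖φ‖ ^ 2 ≤ (∑' n, c (n + 1)) * ‖φ‖ ^ 2 := by
      have := mul_le_mul_of_nonneg_right hge (sq_nonneg ‖φ‖)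
      linarith
    rw [hR, c_zero, ht0]
    rw [heval] at hlow
    linarith
  -- the candidate square root and commutator
  set s' : H →L[ℂ] H := ((Real.sqrt M : ℝ) : ℂ) • Sinf with hs'
  set K : H →L[ℂ] H := ((Real.sqrt M : ℝ) : ℂ) • K₀ with hK
  have hsqrtM : (0:ℝ) ≤ Real.sqrt M := Real.sqrt_nonneg M
  have hs'sa : IsSelfAdjoint s' := by
    rw [hs']
    exact (show IsSelfAdjoint ((Real.sqrt M : ℝ) : ℂ) by
      simp [IsSelfAdjoint, Complex.star_def, Complex.conj_ofReal]).smul hSinfsa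
  have hs'pos : ∀ φ : H, 0 ≤ (⟪φ, s' φ⟫_ℂ).re := by
    intro φ
    rw [hs']
    simp only [ContinuousLinearMap.smul_apply, inner_smul_right, Complex.re_ofReal_mul]
    exact mul_nonneg hsqrtM (hSinfpos φ)
  have hscal : ((Real.sqrt M : ℝ) : ℂ) * ((Real.sqrt M : ℝ) : ℂ) * ((M⁻¹ : ℝ) : ℂ) = 1 := by
    have e3 : Real.sqrt M * Real.sqrt M = M := Real.mul_self_sqrt hM0.le
    have e4 : Real.sqrt M * Real.sqrt M * M⁻¹ = 1 := by
      rw [e3]; field_simp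
    exact_mod_cast congrArg Complex.ofReal e4
  have hs'sq : s' * s' = g := by
    rw [hs', smul_mul_smul_comm, hSsq]
    have e1 : (1 : H →L[ℂ] H) - A₀ = ((M⁻¹ : ℝ) : ℂ) • g := by rw [hA₀]; abel
    rw [e1, smul_smul, hscal, one_smul]
  -- uniqueness of the positive square root: sq = s'
  have hcomm' : sq * s' = s' * sq := by
    rw [hs', Commute.smul_right hcommS _]
  have hsqeq : sq = s' := by
    set d : H →L[ℂ] H := sq - s' with hd
    have hdsa : IsSelfAdjoint d := hB.sub hs'sa
    have hzero : d * (sq + s') = 0 := by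
      rw [hd, sub_mul, mul_add, mul_add, hmul, hs'sq, hcomm']
      abel
    have hkill : ∀ φ : H, d (d φ) = 0 := by
      intro φ
      have hform : (⟪d φ, sq (d φ)⟫_ℂ).re + (⟪d φ, s' (d φ)⟫_ℂ).re = 0 := by
        have e1 : ⟪d φ, sq (d φ)⟫_ℂ + ⟪d φ, s' (d φ)⟫_ℂ = ⟪d φ, (sq + s') (d φ)⟫_ℂ := by
          rw [ContinuousLinearMap.add_apply, inner_add_right]
        have e2 : ⟪d φ, (sq + s') (d φ)⟫_ℂ = ⟪φ, d ((sq + s') (d φ))⟫_ℂ :=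
          sym hdsa φ ((sq + s') (d φ))
        have e3 : d ((sq + s') (d φ)) = (d * (sq + s')) (d φ) := rfl
        rw [e3, hzero] at e2
        simp only [ContinuousLinearMap.zero_apply, inner_zero_right] at e2
        have := congrArg Complex.re (e1.trans e2)
        simpa using this
      have h1 : (⟪d φ, sq (d φ)⟫_ℂ).re = 0 :=
        le_antisymm (by linarith [hs'pos (d φ)]) (hsq_pos (d φ))
      have h2 : (⟪d φ, s' (d φ)⟫_ℂ).re = 0 := by linarith
      have h3 : sq (d φ) = 0 := kill_of_form_zero hB hsq_pos h1
      have h4 : s' (d φ) = 0 := kill_of_form_zero hs'sa hs'pos h2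
      have e5 : d (d φ) = sq (d φ) - s' (d φ) := by
        rw [hd]; exact ContinuousLinearMap.sub_apply sq s' (d φ)
      rw [e5, h3, h4, sub_zero]
    ext φ
    have h5 : (⟪d φ, d φ⟫_ℂ) = 0 := by
      rw [sym hdsa φ (d φ), hkill φ, inner_zero_right]
    have h6 : d φ = 0 := inner_self_eq_zero.mp h5
    have h7 : sq φ - s' φ = 0 := by
      rw [hd] at h6
      simpa using h6
    exact sub_eq_zero.mp h7
  -- the Sylvester identity
  have hcS : Summable fun n => ∑ k ∈ Finset.range (n + 1),
      ((c k : ℂ) • A₀ ^ k) * ((c (n - k) : ℂ) • D A₀ B₀ (n - k)) :=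
    (summable_norm_sum_mul_range_of_summable_norm hsummSnorm hsummDnorm).of_norm
  have hcD : Summable fun n => ∑ k ∈ Finset.range (n + 1),
      ((c k : ℂ) • D A₀ B₀ k) * ((c (n - k) : ℂ) • A₀ ^ (n - k)) :=
    (summable_norm_sum_mul_range_of_summable_norm hsummDnorm hsummSnorm).of_norm
  have hfinal : Sinf * K₀ + K₀ * Sinf = ((M⁻¹ : ℝ) : ℂ) • B := by
    have h9 : ∑' n, ((∑ k ∈ Finset.range (n + 1),
          ((c k : ℂ) • A₀ ^ k) * ((c (n - k) : ℂ) • D A₀ B₀ (n - k)))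
        + (∑ k ∈ Finset.range (n + 1),
          ((c k : ℂ) • D A₀ B₀ k) * ((c (n - k) : ℂ) • A₀ ^ (n - k))))
        = ∑' n, (E n : ℂ) • D A₀ B₀ n := by
      apply tsum_congr
      intro n
      rw [← Finset.sum_add_distrib]
      exact hEsumD n
    rw [hSinf, hK₀, tsum_mul_tsum_eq_tsum_sum_range_of_summable_norm hsummSnorm hsummDnorm,
      tsum_mul_tsum_eq_tsum_sum_range_of_summable_norm hsummDnorm hsummSnorm,
      ← Summable.tsum_add hcS hcD, h9, htsum01 (fun n => D A₀ B₀ n), E_zero, E_one, D_zero, D_one, hB₀]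
    simp
  -- conclusion
  have hPK : CommForm Hop s' K := by
    have := commForm_smul hHop ((Real.sqrt M : ℝ) : ℂ) hPS
    rw [← hs', ← hK] at this
    exact this
  refine ⟨K, ?_, ?_⟩
  · intro φ ψ hφ hψ
    rw [hsqeq]
    exact hPK φ ψ hφ hψ
  · show sq * K + K * sq = B
    rw [hsqeq, hK, hs', smul_mul_smul_comm, smul_mul_smul_comm, ← smul_add, hfinal,
      smul_smul, hscal, one_smul]
end
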